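/- arXiv:1612.00785 — 3 statements merged into one kernel-verified Lean document; each statement's English description precedes it below -/
import Mathlib

section
/- Let A ⊆ ℝ^(m+n) be an F_σ set. Then A has nonempty interior if and only if the set { x ∈ ℝ^m : the fiber A_x ⊆ ℝ^n has nonempty interior } is non-meager in ℝ^m. -/
open Set TopologicalSpace

/-- A nonempty open set in a Baire space is not meagre. -/
lemma aux_open_not_meagre {X : Type*} [TopologicalSpace X] [BaireSpace X]
    {U : Set X} (hU : IsOpen U) (hne : U.Nonempty) : ¬ IsMeagre U := by
  intro h
  have hd : Dense Uᶜ := dense_of_mem_residual h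
  obtain ⟨x, hx⟩ := hd.inter_open_nonempty U hU hne
  exact hx.2 hx.1

/-- If `F` is a closed set with empty interior in a product, then the set of `x` whose fiber
has nonempty interior is meagre (assuming second countability of the second factor). -/
lemma aux_fiber_meagre {X Y : Type*} [TopologicalSpace X] [TopologicalSpace Y]
    [SecondCountableTopology Y] {F : Set (X × Y)} (hF : IsClosed F)
    (hint : interior F = ∅) :
    IsMeagre {x : X | (interior {y : Y | (x, y) ∈ F}).Nonempty} := by
  obtain ⟨b, hbc, hbne, hb⟩ := exists_countable_basis Y
  set T : Set Y → Set X := fun V => {x | ∀ y ∈ V, (x, y) ∈ F} with hT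
  have hsub : {x : X | (interior {y : Y | (x, y) ∈ F}).Nonempty} ⊆ ⋃ V ∈ b, T V := by
    intro x hx
    obtain ⟨y, hy⟩ := hx
    obtain ⟨V, hVb, hyV, hVsub⟩ := hb.exists_subset_of_mem_open hy isOpen_interior
    refine mem_iUnion₂.2 ⟨V, hVb, fun z hz => ?_⟩
    have h1 : z ∈ interior {y : Y | (x, y) ∈ F} := hVsub hz
    exact interior_subset (s := {y | (x, y) ∈ F}) h1
  refine IsMeagre.mono hsub ?_
  -- each `T V` for `V ∈ b` is closed with empty interior
  have hTmeagre : ∀ V ∈ b, IsClosed (T V) ∧ interior (T V) = ∅ := by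
    intro V hVb
    have hVne : V.Nonempty := nonempty_iff_ne_empty.2 (fun h => hbne (h ▸ hVb))
    constructor
    · have : T V = ⋂ y ∈ V, (fun x => (x, y)) ⁻¹' F := by
        ext x; simp [hT]
      rw [this]
      exact isClosed_biInter fun y _ => hF.preimage (Continuous.prodMk_left y)
    · by_contra h
      obtain ⟨x, hx⟩ := nonempty_iff_ne_empty.2 h
      obtain ⟨y, hyV⟩ := hVne
      have hopen : IsOpen (interior (T V) ×ˢ V) :=
        isOpen_interior.prod (hb.isOpen hVb)
      have hsub' : interior (T V) ×ˢ V ⊆ F := by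
        rintro ⟨x', y'⟩ ⟨hx', hy'⟩
        exact interior_subset hx' y' hy'
      have : (x, y) ∈ interior F :=
        interior_maximal hsub' hopen ⟨hx, hyV⟩
      rw [hint] at this
      exact this
  -- a countable union of nowhere dense sets is meagre
  rw [IsMeagre, compl_iUnion₂]
  refine (countable_bInter_mem hbc).2 fun V hVb => ?_
  obtain ⟨hcl, hin⟩ := hTmeagre V hVb
  exact residual_of_dense_open hcl.isOpen_compl
    ((isClosed_isNowhereDense_iff_compl.1 ⟨hcl, hcl.isNowhereDense_iff.2 hin⟩).2)

theorem stmt4 {m n : ℕ} (A : Set ((Fin m → ℝ) × (Fin n → ℝ)))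
    (hA : ∃ F : ℕ → Set ((Fin m → ℝ) × (Fin n → ℝ)), (∀ i, IsClosed (F i)) ∧ A = ⋃ i, F i) :
    (interior A).Nonempty ↔
      ¬ IsMeagre {x : Fin m → ℝ | (interior {y : Fin n → ℝ | (x, y) ∈ A}).Nonempty} := by
  obtain ⟨F, hFcl, hFU⟩ := hA
  constructor
  · rintro ⟨p, hp⟩ hmeagre
    obtain ⟨U, V, hU, hV, hpU, hpV, hUV⟩ := isOpen_prod_iff.1 isOpen_interior p.1 p.2 hp
    have hsub : U ⊆ {x : Fin m → ℝ | (interior {y : Fin n → ℝ | (x, y) ∈ A}).Nonempty} := by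
      intro x hx
      refine ⟨p.2, ?_⟩
      have : V ⊆ {y : Fin n → ℝ | (x, y) ∈ A} := fun y hy => by
        have h1 : (x, y) ∈ interior A := hUV (mk_mem_prod hx hy)
        exact show (x, y) ∈ A from interior_subset h1
      exact interior_maximal this hV hpV
    exact aux_open_not_meagre hU ⟨p.1, hpU⟩ (hmeagre.mono hsub)
  · intro h
    by_contra hne
    apply h
    have hintA : interior A = ∅ := not_nonempty_iff_eq_empty.1 hne
    have hFint : ∀ i, interior (F i) = ∅ := fun i =>
      eq_empty_of_subset_empty (hintA ▸ interior_mono (hFU ▸ subset_iUnion F i))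
    have hsub : {x : Fin m → ℝ | (interior {y : Fin n → ℝ | (x, y) ∈ A}).Nonempty} ⊆
        ⋃ i, {x : Fin m → ℝ | (interior {y : Fin n → ℝ | (x, y) ∈ F i}).Nonempty} := by
      intro x hx
      by_contra hxn
      simp only [mem_iUnion, mem_setOf_eq, not_exists] at hxn
      -- each fiber of `F i` over `x` is closed with empty interior, hence nowhere dense
      have hmeag : ∀ i, IsMeagre {y : Fin n → ℝ | (x, y) ∈ F i} := by
        intro i
        have hcl : IsClosed {y : Fin n → ℝ | (x, y) ∈ F i} :=
          (hFcl i).preimage (Continuous.prodMk_right x)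
        have hin : interior {y : Fin n → ℝ | (x, y) ∈ F i} = ∅ :=
          not_nonempty_iff_eq_empty.1 (hxn i)
        rw [IsMeagre]
        exact residual_of_dense_open hcl.isOpen_compl
          ((isClosed_isNowhereDense_iff_compl.1 ⟨hcl, hcl.isNowhereDense_iff.2 hin⟩).2)
      have hunion : IsMeagre (⋃ i, {y : Fin n → ℝ | (x, y) ∈ F i}) := isMeagre_iUnion hmeag
      have hWsub : interior {y : Fin n → ℝ | (x, y) ∈ A} ⊆
          ⋃ i, {y : Fin n → ℝ | (x, y) ∈ F i} := by
        intro y hy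
        have h1 : y ∈ interior {y : Fin n → ℝ | (x, y) ∈ A} := hy
        have : (x, y) ∈ A := interior_subset (s := {y | (x, y) ∈ A}) h1
        rw [hFU] at this
        simpa using this
      exact aux_open_not_meagre isOpen_interior hx (hunion.mono hWsub)
    exact (isMeagre_iUnion fun i => aux_fiber_meagre (hFcl i) (hFint i)).mono hsub
end

section
/- Let E ⊆ ℝ^n and let A ⊆ ℝ be the set of all coordinates of elements of E (i.e., A = ⋃_{1≤i≤n} π_i(E) where π_i is the i-th coordinate projection). If the Hausdorff dimension of E^k is zero for all k ≥ 1, then the Hausdorff dimension of A^k is zero for all k ≥ 1. -/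
theorem stmt8 {n : ℕ} (E : Set (Fin n → ℝ)) (A : Set ℝ)
    (hA : A = {a : ℝ | ∃ x ∈ E, ∃ i : Fin n, x i = a})
    (h : ∀ k : ℕ, 1 ≤ k → dimH {u : Fin k → (Fin n → ℝ) | ∀ j, u j ∈ E} = 0) :
    ∀ k : ℕ, 1 ≤ k → dimH {u : Fin k → ℝ | ∀ j, u j ∈ A} = 0 := by
  intro k hk
  have hE := h k hk
  -- Φ f v j = v j (f j)
  have hlip : ∀ f : Fin k → Fin n,
      LipschitzWith 1 (fun v : Fin k → (Fin n → ℝ) => fun j => v j (f j)) := by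
    intro f
    apply LipschitzWith.of_edist_le
    intro v w
    rw [edist_pi_le_iff]
    intro j
    exact le_trans (edist_le_pi_edist (v j) (w j) (f j)) (edist_le_pi_edist v w j)
  have hset : {u : Fin k → ℝ | ∀ j, u j ∈ A} =
      ⋃ f : Fin k → Fin n,
        (fun v : Fin k → (Fin n → ℝ) => fun j => v j (f j)) ''
          {v : Fin k → (Fin n → ℝ) | ∀ j, v j ∈ E} := by
    ext u
    simp only [Set.mem_setOf_eq, Set.mem_iUnion, Set.mem_image]
    constructor
    · intro hu
      have : ∀ j : Fin k, ∃ x ∈ E, ∃ i : Fin n, x i = u j := by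
        intro j; have := hu j; rw [hA] at this; exact this
      choose x hx i hi using this
      exact ⟨i, x, hx, funext hi⟩
    · rintro ⟨f, v, hv, rfl⟩
      intro j
      rw [hA]
      exact ⟨v j, hv j, f j, rfl⟩
  rw [hset]
  apply le_antisymm _ (zero_le)
  rw [dimH_iUnion]
  apply iSup_le
  intro f
  calc dimH _ ≤ dimH {v : Fin k → (Fin n → ℝ) | ∀ j, v j ∈ E} :=
        (hlip f).dimH_image_le _
    _ = 0 := hE
end

section
/- If A ⊆ ℝ^n is an F_σ set and dim_H(A) denotes its Hausdorff dimension, then the topological (small inductive) dimension of A is at most dim_H(A); moreover if dim_T(A) ≥ m then some coordinate projection π : ℝ^n → ℝ^m maps A onto a set with nonempty interior, hence of Hausdorff dimension m. -/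
open scoped ENNReal
open Set

lemma isMeagre_iUnion' {X : Type*} [TopologicalSpace X] {ι : Type*} [Countable ι]
    {f : ι → Set X} (h : ∀ i, IsMeagre (f i)) : IsMeagre (⋃ i, f i) := by
  rw [IsMeagre, compl_iUnion]
  exact countable_iInter_mem.2 h

lemma IsMeagre.interior_empty {X : Type*} [TopologicalSpace X] [BaireSpace X]
    {s : Set X} (h : IsMeagre s) : interior s = ∅ := by
  have hd : Dense sᶜ := dense_of_mem_residual h
  rw [← Set.not_nonempty_iff_eq_empty]
  rintro ⟨x, hx⟩
  rcases hd.exists_mem_open isOpen_interior ⟨x, hx⟩ with ⟨y, hy, hy'⟩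
  exact hy (interior_subset hy')

lemma isMeagre_of_closed_empty_interior {X : Type*} [TopologicalSpace X]
    {s : Set X} (hc : IsClosed s) (hi : interior s = ∅) : IsMeagre s := by
  have hd : Dense sᶜ := interior_eq_empty_iff_dense_compl.mp hi
  exact residual_of_dense_open hc.isOpen_compl hd

lemma IsSigmaCompact.isMeagre' {X : Type*} [TopologicalSpace X] [T2Space X]
    {s : Set X} (hs : IsSigmaCompact s) (hi : interior s = ∅) : IsMeagre s := by
  obtain ⟨K, hK, rfl⟩ := hs
  refine isMeagre_iUnion' fun j => isMeagre_of_closed_empty_interior (hK j).isClosed ?_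
  have h2 : interior (K j) ⊆ interior (⋃ i, K i) := interior_mono (subset_iUnion K j)
  rw [hi] at h2
  exact h2.antisymm (empty_subset _)
open Metric

lemma cons_continuous_right {m : ℕ} (t : ℝ) :
    Continuous (fun y : Fin m → ℝ => Fin.cons t y : (Fin m → ℝ) → (Fin (m+1) → ℝ)) := by
  refine continuous_pi fun j => ?_
  refine Fin.cases ?_ (fun j => ?_) j
  · simpa using continuous_const
  · simpa using continuous_apply j

lemma cons_continuous_left {m : ℕ} (y : Fin m → ℝ) :
    Continuous (fun t : ℝ => Fin.cons t y : ℝ → (Fin (m+1) → ℝ)) := by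
  refine continuous_pi fun j => ?_
  refine Fin.cases ?_ (fun j => ?_) j
  · simpa using continuous_id'
  · simpa using continuous_const

lemma tail_continuous {m : ℕ} :
    Continuous (fun z : Fin (m+1) → ℝ => Fin.tail z) :=
  continuous_pi fun j : Fin m => continuous_apply j.succ

/-- If `B ⊆ ℝ^{m+1}` is σ-compact with empty interior, then the set of `t` such that the
slice `{y | cons t y ∈ B}` has nonempty interior is meager. -/
lemma slice_bad_meagre {m : ℕ} {B : Set (Fin (m+1) → ℝ)} (hB : IsSigmaCompact B)
    (hiB : interior B = ∅) :
    IsMeagre {t : ℝ | (interior {y : Fin m → ℝ | Fin.cons t y ∈ B}).Nonempty} := by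
  obtain ⟨K, hK, rfl⟩ := hB
  obtain ⟨D, hDc, hDd⟩ := TopologicalSpace.exists_countable_dense (Fin m → ℝ)
  obtain ⟨u, hu⟩ := hDc.exists_eq_range (hDd.nonempty)
  set T : ℕ → ℕ → ℕ → Set ℝ := fun j i k =>
    {t | closedBall (u i) (1/(k+1)) ⊆ {y | Fin.cons t y ∈ K j}} with hT
  have hTclosed : ∀ j i k, IsClosed (T j i k) := by
    intro j i k
    have : T j i k = ⋂ y ∈ closedBall (u i) (1/(k+1)),
        (fun t : ℝ => Fin.cons t y) ⁻¹' (K j) := by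
      ext t; simp [hT, Set.subset_def]
    rw [this]
    exact isClosed_biInter fun y _ => (hK j).isClosed.preimage (cons_continuous_left y)
  have hTint : ∀ j i k, interior (T j i k) = ∅ := by
    intro j i k
    by_contra h
    obtain ⟨t₀, ht₀⟩ := Set.nonempty_iff_ne_empty.2 h
    obtain ⟨δ, hδ, hball⟩ := Metric.isOpen_iff.1 isOpen_interior t₀ ht₀
    have hKj : (interior (K j)).Nonempty := by
      refine ⟨Fin.cons t₀ (u i), ?_⟩
      have hopen : IsOpen ((fun z : Fin (m+1) → ℝ => z 0) ⁻¹' ball t₀ δ ∩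
          (fun z : Fin (m+1) → ℝ => Fin.tail z) ⁻¹' ball (u i) (1/(k+1))) :=
        (isOpen_ball.preimage (continuous_apply (0 : Fin (m+1)))).inter
          (isOpen_ball.preimage tail_continuous)
      refine mem_interior.2 ⟨_, ?_, hopen, ?_⟩
      · rintro z ⟨hz0, hzt⟩
        have h2 : z 0 ∈ T j i k := interior_subset (hball hz0)
        have h3 : Fin.tail z ∈ closedBall (u i) (1/(k+1)) := ball_subset_closedBall hzt
        have := h2 h3
        simpa [Fin.cons_self_tail] using this
      · constructor
        · refine Set.mem_preimage.2 ?_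
          rw [show (Fin.cons t₀ (u i) : Fin (m+1) → ℝ) 0 = t₀ from Fin.cons_zero _ _]
          exact mem_ball_self hδ
        · refine Set.mem_preimage.2 ?_
          have ht : Fin.tail (Fin.cons t₀ (u i) : Fin (m+1) → ℝ) = u i := by
            ext j; simp [Fin.tail]
          rw [ht]
          exact mem_ball_self (by positivity)
    have hsub2 : interior (K j) ⊆ interior (⋃ l, K l) := interior_mono (subset_iUnion K j)
    rw [hiB] at hsub2
    exact absurd (hsub2 hKj.choose_spec) (by simp)
  have hsub : {t : ℝ | (interior {y : Fin m → ℝ | Fin.cons t y ∈ ⋃ j, K j}).Nonempty}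
      ⊆ ⋃ (j : ℕ) (i : ℕ) (k : ℕ), T j i k := by
    intro t ht
    obtain ⟨y₀, hy₀⟩ := ht
    have hslice : ∃ j, (interior {y : Fin m → ℝ | Fin.cons t y ∈ K j}).Nonempty := by
      by_contra h
      have h' : ∀ j, interior {y : Fin m → ℝ | Fin.cons t y ∈ K j} = ∅ :=
        fun j => Set.not_nonempty_iff_eq_empty.1 fun hne => h ⟨j, hne⟩
      have hmea : IsMeagre {y : Fin m → ℝ | Fin.cons t y ∈ ⋃ j, K j} := by
        have heq : {y : Fin m → ℝ | Fin.cons t y ∈ ⋃ j, K j}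
            = ⋃ j, {y : Fin m → ℝ | Fin.cons t y ∈ K j} := by
          ext y; simp
        rw [heq]
        exact isMeagre_iUnion' fun j => isMeagre_of_closed_empty_interior
          ((hK j).isClosed.preimage (cons_continuous_right t)) (h' j)
      have := hmea.interior_empty
      rw [this] at hy₀
      exact hy₀
    obtain ⟨j, y, hy⟩ := hslice
    obtain ⟨r, hr, hball⟩ := Metric.isOpen_iff.1 isOpen_interior y hy
    obtain ⟨q, hqD, hq⟩ := hDd.exists_mem_open (isOpen_ball : IsOpen (ball y (r/3)))
      ⟨y, mem_ball_self (by linarith)⟩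
    rw [hu] at hqD
    obtain ⟨i, rfl⟩ := hqD
    obtain ⟨k, hk⟩ := exists_nat_one_div_lt (show (0:ℝ) < r/3 by linarith)
    refine mem_iUnion.2 ⟨j, mem_iUnion.2 ⟨i, mem_iUnion.2 ⟨k, ?_⟩⟩⟩
    intro w hw
    have hw1 : dist w (u i) ≤ 1/(k+1) := mem_closedBall.1 hw
    have hw1' : dist w (u i) < r/3 := lt_of_le_of_lt hw1 (by exact_mod_cast hk)
    have hw2 : dist (u i) y < r/3 := mem_ball.1 hq
    have : dist w y < r := by
      calc dist w y ≤ dist w (u i) + dist (u i) y := dist_triangle _ _ _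
        _ < r/3 + r/3 := add_lt_add hw1' hw2
        _ < r := by linarith
    exact interior_subset (hball (mem_ball.2 this))
  refine IsMeagre.mono (hs := ?_) hsub
  have heq2 : (⋃ (j : ℕ) (i : ℕ) (k : ℕ), T j i k)
      = ⋃ p : ℕ × ℕ × ℕ, T p.1 p.2.1 p.2.2 := by
    ext t
    simp only [mem_iUnion]
    exact ⟨fun ⟨j, i, k, h⟩ => ⟨⟨j, i, k⟩, h⟩, fun ⟨⟨j, i, k⟩, h⟩ => ⟨j, i, k, h⟩⟩
  rw [heq2]
  exact isMeagre_iUnion' fun p =>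
    isMeagre_of_closed_empty_interior (hTclosed _ _ _) (hTint _ _ _)


lemma hyperplane_interior_empty {m : ℕ} (j : Fin m) (t : ℝ) :
    interior {y : Fin m → ℝ | y j = t} = ∅ := by
  rw [← Set.not_nonempty_iff_eq_empty]
  rintro ⟨y, hy⟩
  obtain ⟨δ, hδ, hball⟩ := Metric.isOpen_iff.1 isOpen_interior y hy
  set w : Fin m → ℝ := Function.update y j (y j + δ/2) with hw
  have hwy : dist w y < δ := by
    rw [dist_pi_lt_iff hδ]
    intro b
    by_cases hb : b = j
    · subst hb
      rw [hw, Function.update_self, Real.dist_eq]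
      rw [show y b + δ/2 - y b = δ/2 by ring, abs_of_pos (by linarith)]
      linarith
    · rw [hw, Function.update_of_ne hb, dist_self]
      exact hδ
  have hwmem : w ∈ {y : Fin m → ℝ | y j = t} :=
    interior_subset (hball (Metric.mem_ball.2 hwy))
  have hymem : y j = t := show y ∈ {y : Fin m → ℝ | y j = t} from interior_subset hy
  have : y j + δ/2 = t := by simpa [hw] using hwmem
  linarith

lemma sigma_compact_inter_closed {X : Type*} [TopologicalSpace X] {A C : Set X}
    (hA : IsSigmaCompact A) (hC : IsClosed C) : IsSigmaCompact (A ∩ C) := by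
  obtain ⟨K, hK, rfl⟩ := hA
  rw [Set.iUnion_inter]
  exact isSigmaCompact_iUnion_of_isCompact _ fun j => (hK j).inter_right hC

lemma proj_continuous {n m : ℕ} (e : Fin m ↪ Fin n) :
    Continuous (fun x : Fin n → ℝ => x ∘ e) :=
  continuous_pi fun j => continuous_apply (e j)


lemma IsMeagre.union' {X : Type*} [TopologicalSpace X] {s t : Set X}
    (hs : IsMeagre s) (ht : IsMeagre t) : IsMeagre (s ∪ t) := by
  rw [IsMeagre, Set.compl_union]
  exact Filter.inter_mem hs ht

/-- `IndLE k A` says that the small inductive (topological) dimension of `A` is at most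
`k - 1`; in particular `IndLE 0 A` means `A = ∅` (dimension `-∞`), and `¬ IndLE m A` means
that the topological dimension of `A` is at least `m`. -/
def IndLE {X : Type*} [TopologicalSpace X] : ℕ → Set X → Prop
  | 0, A => A = ∅
  | (k + 1), A => ∀ x ∈ A, ∀ U ∈ nhds x, ∃ V ∈ nhds x, closure V ⊆ U ∧
      IndLE k (frontier V ∩ A)

lemma main_nobeling {n : ℕ} : ∀ (m : ℕ) (A : Set (Fin n → ℝ)), IsSigmaCompact A →
    (∀ e : Fin m ↪ Fin n, interior ((fun x => x ∘ e) '' A) = ∅) → IndLE m A := by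
  intro m
  induction m with
  | zero =>
    intro A hσ h
    show A = ∅
    rw [← Set.not_nonempty_iff_eq_empty]
    rintro ⟨z, hz⟩
    have h0 := h (Function.Embedding.ofIsEmpty)
    have huniv : (fun x : Fin n → ℝ => x ∘ (Function.Embedding.ofIsEmpty : Fin 0 ↪ Fin n)) '' A
        = Set.univ := Set.eq_univ_of_forall fun y => ⟨z, hz, Subsingleton.elim _ _⟩
    rw [huniv, interior_univ] at h0
    exact Set.univ_nonempty.ne_empty h0
  | succ m IH =>
    intro A hσ h
    show ∀ x ∈ A, ∀ U ∈ nhds x, ∃ V ∈ nhds x, closure V ⊆ U ∧ IndLE m (frontier V ∩ A)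
    intro x hx U hU
    obtain ⟨ε, hε, hball⟩ := Metric.nhds_basis_closedBall.mem_iff.1 hU
    classical
    set BadE : Fin n → (Fin m ↪ Fin n) → Set ℝ := fun i e' =>
      if i ∈ Set.range e' then ∅ else
        {t | (interior ((fun x => x ∘ e') '' (A ∩ {z | z i = t}))).Nonempty} with hBadEdef
    have hBadE : ∀ i e', IsMeagre (BadE i e') := by
      intro i e'
      by_cases hi : i ∈ Set.range e'
      · simp only [hBadEdef, if_pos hi]
        exact IsMeagre.empty
      · simp only [hBadEdef, if_neg hi]
        have hinj : Function.Injective (Fin.cons i ⇑e' : Fin (m+1) → Fin n) := by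
          intro a b hab
          rcases Fin.eq_zero_or_eq_succ a with rfl | ⟨a', rfl⟩ <;>
            rcases Fin.eq_zero_or_eq_succ b with rfl | ⟨b', rfl⟩
          · rfl
          · rw [Fin.cons_zero, Fin.cons_succ] at hab
            exact absurd ⟨b', hab.symm⟩ hi
          · rw [Fin.cons_succ, Fin.cons_zero] at hab
            exact absurd ⟨a', hab⟩ hi
          · rw [Fin.cons_succ, Fin.cons_succ] at hab
            rw [e'.injective hab]
        set e'' : Fin (m+1) ↪ Fin n := ⟨Fin.cons i ⇑e', hinj⟩ with he''
        have hkey : ∀ t : ℝ, {y : Fin m → ℝ | Fin.cons t y ∈ (fun x => x ∘ e'') '' A}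
            = (fun x => x ∘ e') '' (A ∩ {z | z i = t}) := by
          intro t
          ext y
          constructor
          · rintro ⟨z, hzA, hz⟩
            have hzi : z i = t := by
              have h0 := congrFun hz 0
              simpa [he''] using h0
            refine ⟨z, ⟨hzA, hzi⟩, ?_⟩
            ext j
            have hj := congrFun hz j.succ
            simpa [he''] using hj
          · rintro ⟨z, ⟨hzA, hzi⟩, rfl⟩
            refine ⟨z, hzA, ?_⟩
            funext j
            refine Fin.cases ?_ (fun j => ?_) j
            · simpa [he''] using hzi
            · simp [he'']
        have hB : IsSigmaCompact ((fun x : Fin n → ℝ => x ∘ e'') '' A) :=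
          hσ.image (proj_continuous e'')
        refine IsMeagre.mono (hs := slice_bad_meagre hB (h e'')) ?_
        intro t ht
        simp only [Set.mem_setOf_eq] at ht ⊢
        rw [hkey t]
        exact ht
    have hBad : ∀ i : Fin n, IsMeagre (⋃ e' : Fin m ↪ Fin n, BadE i e') := fun i =>
      isMeagre_iUnion' (hBadE i)
    have hexA : ∀ i : Fin n, ∃ t, t ∈ Set.Ioo (x i - ε) (x i - ε/2) ∧
        t ∉ ⋃ e' : Fin m ↪ Fin n, BadE i e' := by
      intro i
      have hd : Dense (⋃ e' : Fin m ↪ Fin n, BadE i e')ᶜ := dense_of_mem_residual (hBad i)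
      obtain ⟨t, htc, ht⟩ := hd.exists_mem_open
        (isOpen_Ioo : IsOpen (Set.Ioo (x i - ε) (x i - ε/2)))
        (Set.nonempty_Ioo.2 (by linarith))
      exact ⟨t, ht, htc⟩
    have hexB : ∀ i : Fin n, ∃ t, t ∈ Set.Ioo (x i + ε/2) (x i + ε) ∧
        t ∉ ⋃ e' : Fin m ↪ Fin n, BadE i e' := by
      intro i
      have hd : Dense (⋃ e' : Fin m ↪ Fin n, BadE i e')ᶜ := dense_of_mem_residual (hBad i)
      obtain ⟨t, htc, ht⟩ := hd.exists_mem_open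
        (isOpen_Ioo : IsOpen (Set.Ioo (x i + ε/2) (x i + ε)))
        (Set.nonempty_Ioo.2 (by linarith))
      exact ⟨t, ht, htc⟩
    choose a ha haB using hexA
    choose b hb hbB using hexB
    have hab : ∀ i, a i < x i ∧ x i < b i := fun i =>
      ⟨by have := (ha i).2; linarith, by have := (hb i).1; linarith⟩
    set V : Set (Fin n → ℝ) := Set.pi Set.univ (fun i => Set.Ioo (a i) (b i)) with hVdef
    have hVopen : IsOpen V := isOpen_set_pi Set.finite_univ fun i _ => isOpen_Ioo
    have hxV : x ∈ V := fun i _ => ⟨(hab i).1, (hab i).2⟩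
    have hVnhds : V ∈ nhds x := hVopen.mem_nhds hxV
    have hclV : closure V = Set.pi Set.univ fun i => Set.Icc (a i) (b i) := by
      rw [hVdef, closure_pi_set]
      refine Set.pi_congr rfl fun i _ => ?_
      exact closure_Ioo (ne_of_lt (lt_trans (hab i).1 (hab i).2))
    refine ⟨V, hVnhds, ?_, ?_⟩
    · rw [hclV]
      intro z hz
      refine hball ?_
      rw [Metric.mem_closedBall, dist_pi_le_iff hε.le]
      intro i
      obtain ⟨hz1, hz2⟩ := hz i (Set.mem_univ i)
      rw [Real.dist_eq, abs_le]
      constructor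
      · linarith [(ha i).1]
      · linarith [(hb i).2]
    · -- IndLE m (frontier V ∩ A)
      have hWσ : IsSigmaCompact (frontier V ∩ A) := by
        rw [Set.inter_comm]
        exact sigma_compact_inter_closed hσ isClosed_frontier
      refine IH (frontier V ∩ A) hWσ ?_
      intro e'
      have hfr : frontier V ⊆
          ⋃ i : Fin n, ({z : Fin n → ℝ | z i = a i} ∪ {z | z i = b i}) := by
        intro z hzf
        have hzc : z ∈ closure V := hzf.1
        have hznV : z ∉ V := fun hzV => hzf.2 (by rwa [hVopen.interior_eq])
        rw [hclV] at hzc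
        by_contra hcon
        apply hznV
        intro i _
        simp only [Set.mem_iUnion, Set.mem_union, Set.mem_setOf_eq, not_exists, not_or] at hcon
        obtain ⟨hc1, hc2⟩ := hcon i
        obtain ⟨hi1, hi2⟩ := hzc i (Set.mem_univ i)
        exact ⟨lt_of_le_of_ne hi1 (Ne.symm hc1), lt_of_le_of_ne hi2 hc2⟩
      have hcover : (fun x : Fin n → ℝ => x ∘ e') '' (frontier V ∩ A) ⊆
          ⋃ i : Fin n, ((fun x : Fin n → ℝ => x ∘ e') '' (A ∩ {z | z i = a i}) ∪
                        (fun x : Fin n → ℝ => x ∘ e') '' (A ∩ {z | z i = b i})) := by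
        rintro y ⟨z, ⟨hzf, hzA⟩, rfl⟩
        obtain ⟨i, hi⟩ := Set.mem_iUnion.1 (hfr hzf)
        refine Set.mem_iUnion.2 ⟨i, ?_⟩
        rcases hi with hi | hi
        · exact Or.inl ⟨z, ⟨hzA, hi⟩, rfl⟩
        · exact Or.inr ⟨z, ⟨hzA, hi⟩, rfl⟩
      have hpiece : ∀ (i : Fin n) (t : ℝ), t ∉ (⋃ e'' : Fin m ↪ Fin n, BadE i e'') →
          IsMeagre ((fun x : Fin n → ℝ => x ∘ e') '' (A ∩ {z | z i = t})) := by
        intro i t htB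
        by_cases hi : i ∈ Set.range e'
        · obtain ⟨j, hj⟩ := hi
          refine IsMeagre.mono (hs := isMeagre_of_closed_empty_interior
            (isClosed_eq (continuous_apply j) continuous_const)
            (hyperplane_interior_empty j t)) ?_
          rintro y ⟨z, ⟨hzA, hzi⟩, rfl⟩
          show (z ∘ e') j = t
          show z (e' j) = t
          rw [hj]
          exact hzi
        · have hnot : ¬ (interior ((fun x : Fin n → ℝ => x ∘ e') ''
              (A ∩ {z | z i = t}))).Nonempty := by
            intro hne
            apply htB
            refine Set.mem_iUnion.2 ⟨e', ?_⟩
            simp only [hBadEdef, if_neg hi]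
            exact hne
          refine IsSigmaCompact.isMeagre' ?_ (Set.not_nonempty_iff_eq_empty.1 hnot)
          exact (sigma_compact_inter_closed hσ
            (isClosed_eq (continuous_apply i) continuous_const)).image (proj_continuous e')
      have hmeagre : IsMeagre ((fun x : Fin n → ℝ => x ∘ e') '' (frontier V ∩ A)) := by
        refine IsMeagre.mono (hs := isMeagre_iUnion' fun i : Fin n =>
          IsMeagre.union' (hpiece i (a i) (haB i)) (hpiece i (b i) (hbB i))) hcover
      exact hmeagre.interior_empty

theorem stmt19 {n : ℕ} (A : Set (Fin n → ℝ))
    (hA : ∃ F : ℕ → Set (Fin n → ℝ), (∀ i, IsClosed (F i)) ∧ A = ⋃ i, F i)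
    (m : ℕ) (hm : ¬ IndLE m A) :
    (m : ℝ≥0∞) ≤ dimH A ∧
    ∃ e : Fin m ↪ Fin n, (interior ((fun x => x ∘ e) '' A)).Nonempty ∧
      dimH ((fun x => x ∘ e) '' A) = (m : ℝ≥0∞) := by
  obtain ⟨F, hFc, hAF⟩ := hA
  have hσ : IsSigmaCompact A := by
    rw [hAF]
    exact isSigmaCompact_iUnion _ fun i =>
      isSigmaCompact_univ.of_isClosed_subset (hFc i) (Set.subset_univ _)
  have hE : ∃ e : Fin m ↪ Fin n, (interior ((fun x => x ∘ e) '' A)).Nonempty := by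
    by_contra h
    exact hm (main_nobeling m A hσ fun e =>
      Set.not_nonempty_iff_eq_empty.1 fun hne => h ⟨e, hne⟩)
  obtain ⟨e, hne⟩ := hE
  have hdim : dimH ((fun x => x ∘ e) '' A) = (m : ℝ≥0∞) := by
    rw [Real.dimH_of_nonempty_interior hne, Module.finrank_fintype_fun_eq_card, Fintype.card_fin]
  refine ⟨?_, e, hne, hdim⟩
  have hlip : LipschitzWith 1 (fun x : Fin n → ℝ => x ∘ e) := by
    refine LipschitzWith.of_dist_le_mul fun x₁ x₂ => ?_
    rw [NNReal.coe_one, one_mul]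
    exact (dist_pi_le_iff dist_nonneg).2 fun j => dist_le_pi_dist x₁ x₂ (e j)
  calc (m : ℝ≥0∞) = dimH ((fun x => x ∘ e) '' A) := hdim.symm
    _ ≤ dimH A := hlip.dimH_image_le A
end
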